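/- For all real numbers μ, a01, b01, c010, c011, c001, c101, c0101, c0110: if the matrix M1(μ, a01, b01, c010, c011, c001, c101, c0101, c0110) is positive semidefinite, then μ ≤ 0. -/

import Mathlib

open Matrix

noncomputable def M1 (μ a01 b01 c010 c011 c001 c101 c0101 c0110 : ℝ) :
    Matrix (Fin 9) (Fin 9) ℝ :=
  !![1, 1/2, (4-μ)/6, 1/2, 1/2, (μ+2)/6, (μ+2)/6, 1/2, (1-μ)/6;
     1/2, 1/2, a01, (μ+2)/6, (μ+2)/6, (μ+2)/6, (μ+2)/6, c010, c011;
     (4-μ)/6, a01, (4-μ)/6, 1/2, (1-μ)/6, c010, c011, 1/2, (1-μ)/6;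
     1/2, (μ+2)/6, 1/2, 1/2, b01, (μ+2)/6, c001, 1/2, c101;
     1/2, (μ+2)/6, (1-μ)/6, b01, 1/2, c001, (μ+2)/6, c101, (1-μ)/6;
     (μ+2)/6, (μ+2)/6, c010, (μ+2)/6, c001, (μ+2)/6, c001, c010, c0101;
     (μ+2)/6, (μ+2)/6, c011, c001, (μ+2)/6, c001, (μ+2)/6, c0110, c011;
     1/2, c010, 1/2, 1/2, c101, c010, c0110, 1/2, c101;
     (1-μ)/6, c011, (1-μ)/6, c101, (1-μ)/6, c0101, c011, c101, (1-μ)/6]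

theorem stmt0 (μ a01 b01 c010 c011 c001 c101 c0101 c0110 : ℝ)
    (h : (M1 μ a01 b01 c010 c011 c001 c101 c0101 c0110).PosSemidef) :
    μ ≤ 0 := by
  have key : ∀ v : Fin 9 → ℝ, 0 ≤ v ⬝ᵥ
      (M1 μ a01 b01 c010 c011 c001 c101 c0101 c0110).mulVec v := fun v => by
    simpa using h.dotProduct_mulVec_nonneg v
  -- c010 = (μ+2)/6, using zero-norm vector e4 - e8
  have hc010 : c010 = (μ+2)/6 := by
    by_contra hd
    have hd' : (μ+2)/6 - c010 ≠ 0 := fun hz => hd (by linarith [sub_eq_zero.mp hz])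
    set t : ℝ := -1/((μ+2)/6 - c010) with ht
    have := key ![0,1,0,t,0,0,0,-t,0]
    simp [M1, Matrix.mulVec, dotProduct, Fin.sum_univ_succ] at this
    have htd : t * ((μ+2)/6 - c010) = -1 := by
      rw [ht]; exact div_mul_cancel₀ (-1) hd'
    nlinarith [this, htd]
  -- c011 = a01 + μ/6 - 1/6, using zero-norm vector e1 - e3 - e5 + e9
  have hc011 : c011 = a01 + μ/6 - 1/6 := by
    by_contra hd
    have hd' : 1/6 - a01 - μ/6 + c011 ≠ 0 := fun hz => hd (by linarith)
    set t : ℝ := -1/(1/6 - a01 - μ/6 + c011) with ht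
    have := key ![t,1,-t,0,-t,0,0,0,t]
    simp [M1, Matrix.mulVec, dotProduct, Fin.sum_univ_succ] at this
    have htd : t * (1/6 - a01 - μ/6 + c011) = -1 := by
      rw [ht]; exact div_mul_cancel₀ (-1) hd'
    nlinarith [this, htd]
  -- final: kernel vector k1
  have hk := key ![1,-1,-1,0,-1,1,1,0,0]
  simp [M1, Matrix.mulVec, dotProduct, Fin.sum_univ_succ] at hk
  rw [hc010, hc011] at hk
  nlinarith [hk]
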